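/- Let N ≥ 3 be odd, let 1 ≤ r < m, and let a_1(x), …, a_m(x) ∈ F_2[x]/(x^N − 1), each having exactly t nonzero coefficients with t even, with associated N×N circulant matrices A_1, …, A_m over F_2. Assume that for every r-element subset {i_1, …, i_r} ⊆ [m], gcd( â_{i_1}(x) · ∏_{j=1}^{r−1} ∏_{(c_1,…,c_j) ∈ F_2^j} ( â_{i_{j+1}}(x) − Σ_{k=1}^{j} c_k â_{i_k}(x) ), x^N − 1 ) = x − 1 in F_2[x], where the product is computed in F_2[x]/(x^N − 1) and â denotes the representative of degree < N. Then for every r-element subset {i_1, …, i_r} ⊆ [m], the r(N−1) × r(N−1) block matrix whose (s, l) block (s, l ∈ [r]) is Pu(A_{i_l}^{2^{s−1}}, 1) is invertible over F_2; that is, the block matrix H with blocks Pu(A_j^{2^{s−1}}, 1) for s ∈ [r], j ∈ [m] is the parity-check matrix of an MDS array code over F_2 with sub-packetization level N − 1. -/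

import Mathlib

open Polynomial

/-- The `N × N` circulant matrix over `F` associated with the coefficient vector
`cf : Fin N → F`: its `(a, b)` entry is `cf ((b - a) mod N)`. -/
def circMat {F : Type*} (N : ℕ) (cf : Fin N → F) : Matrix (Fin N) (Fin N) F :=
  Matrix.of fun a b => cf (b - a)

/-- The representative polynomial `â(x) = ∑_{u < N} cf u • x ^ u ∈ F[x]`. -/
noncomputable def repPoly {F : Type*} [Semiring F] (N : ℕ) (cf : Fin N → F) :
    Polynomial F :=
  ∑ u : Fin N, Polynomial.C (cf u) * Polynomial.X ^ (u : ℕ)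

/-- The polynomial `â₁ · ∏_{j=1}^{r-1} ∏_{(c₁,…,c_j) ∈ F₂^j} (â_{j+1} - ∑_{k≤j} c_k â_k)`
appearing in the gcd condition of the paper (specialized to `q = 2`). -/
noncomputable def gcdExpr (r : ℕ) (hr : 0 < r) (pa : Fin r → Polynomial (ZMod 2)) :
    Polynomial (ZMod 2) :=
  pa ⟨0, hr⟩ *
    ∏ j : Fin (r - 1), ∏ c : Fin ((j : ℕ) + 1) → ZMod 2,
      (pa ⟨(j : ℕ) + 1, by have := j.isLt; omega⟩ -
        ∑ k : Fin ((j : ℕ) + 1),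
          Polynomial.C (c k) * pa ⟨(k : ℕ), by have := j.isLt; have := k.isLt; omega⟩)

lemma repPoly_coeff {F : Type*} [Semiring F] (N : ℕ) (cf : Fin N → F) (k : ℕ) :
    (repPoly N cf).coeff k = if h : k < N then cf ⟨k, h⟩ else 0 := by
  rw [repPoly, Polynomial.finset_sum_coeff]
  simp only [Polynomial.coeff_C_mul, Polynomial.coeff_X_pow]
  split_ifs with h
  · rw [Finset.sum_eq_single (⟨k, h⟩ : Fin N)]
    · simp
    · intro b _ hb
      have : k ≠ (b : ℕ) := by
        intro hk; apply hb; ext; simp [← hk]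
      simp [this]
    · simp
  · apply Finset.sum_eq_zero
    intro b _
    have : k ≠ (b : ℕ) := by intro hk; exact h (hk ▸ b.isLt)
    simp [this]

lemma repPoly_eval_one {F : Type*} [CommSemiring F] (N : ℕ) (cf : Fin N → F) :
    (repPoly N cf).eval 1 = ∑ u : Fin N, cf u := by
  simp [repPoly, Polynomial.eval_finset_sum]

lemma repPoly_add {F : Type*} [CommSemiring F] (N : ℕ) (v w : Fin N → F) :
    repPoly N (v + w) = repPoly N v + repPoly N w := by
  simp [repPoly, add_mul, Finset.sum_add_distrib]

lemma repPoly_sum {F : Type*} [CommSemiring F] {ι : Type*} (s : Finset ι) (N : ℕ)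
    (w : ι → Fin N → F) :
    repPoly N (∑ i ∈ s, w i) = ∑ i ∈ s, repPoly N (w i) := by
  classical
  induction s using Finset.induction with
  | empty => simp [repPoly]
  | insert _ _ h ih =>
      rw [Finset.sum_insert h, Finset.sum_insert h, repPoly_add, ih]

lemma dvd_xpow_mod {F : Type*} [CommRing F] (N i : ℕ) :
    (Polynomial.X ^ N - 1 : Polynomial F) ∣ Polynomial.X ^ i - Polynomial.X ^ (i % N) := by
  have key : ∀ q rem : ℕ, (Polynomial.X ^ N - 1 : Polynomial F) ∣
      Polynomial.X ^ (N * q + rem) - Polynomial.X ^ rem := by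
    intro q rem
    rw [pow_add, pow_mul]
    have h1 : (Polynomial.X ^ N - 1 : Polynomial F) ∣ (Polynomial.X ^ N) ^ q - 1 := by
      simpa using sub_dvd_pow_sub_pow (Polynomial.X ^ N : Polynomial F) 1 q
    have : (Polynomial.X ^ N : Polynomial F) ^ q * Polynomial.X ^ rem
        - Polynomial.X ^ rem
        = ((Polynomial.X ^ N) ^ q - 1) * Polynomial.X ^ rem := by ring
    rw [this]
    exact h1.mul_right _
  have := key (i / N) (i % N)
  rwa [Nat.div_add_mod i N] at this

lemma dvd_xpow_of_mod_eq {F : Type*} [CommRing F] (N i j : ℕ) (h : i % N = j % N) :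
    (Polynomial.X ^ N - 1 : Polynomial F) ∣ Polynomial.X ^ i - Polynomial.X ^ j := by
  have h1 := dvd_xpow_mod (F := F) N i
  have h2 := dvd_xpow_mod (F := F) N j
  have : (Polynomial.X ^ i - Polynomial.X ^ j : Polynomial F)
      = (Polynomial.X ^ i - Polynomial.X ^ (i % N))
        - (Polynomial.X ^ j - Polynomial.X ^ (j % N)) := by rw [h]; ring
  rw [this]
  exact dvd_sub h1 h2

lemma bridge {F : Type*} [CommRing F] (N : ℕ) [NeZero N] (v cf : Fin N → F) :
    (Polynomial.X ^ N - 1 : Polynomial F) ∣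
      repPoly N (Matrix.vecMul v (circMat N cf)) - repPoly N v * repPoly N cf := by
  have hL : repPoly N (Matrix.vecMul v (circMat N cf))
      = ∑ a : Fin N, ∑ u : Fin N,
          Polynomial.C (v a) * Polynomial.C (cf u) * Polynomial.X ^ (((a + u : Fin N) : ℕ)) := by
    rw [repPoly]
    have : ∀ b : Fin N, Polynomial.C (Matrix.vecMul v (circMat N cf) b)
        = ∑ a : Fin N, Polynomial.C (v a) * Polynomial.C (cf (b - a)) := by
      intro b
      simp [Matrix.vecMul, dotProduct, circMat, map_sum]
    simp_rw [this, Finset.sum_mul]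
    rw [Finset.sum_comm]
    refine Finset.sum_congr rfl fun a _ => ?_
    refine Fintype.sum_equiv (Equiv.subRight a) _ _ fun b => ?_
    have hb : a + (b - a) = b := by rw [add_comm]; exact sub_add_cancel b a
    simp [Equiv.subRight, hb]
  have hR : repPoly N v * repPoly N cf
      = ∑ a : Fin N, ∑ u : Fin N,
          Polynomial.C (v a) * Polynomial.C (cf u) * Polynomial.X ^ ((a : ℕ) + (u : ℕ)) := by
    rw [repPoly, repPoly, Finset.sum_mul_sum]
    refine Finset.sum_congr rfl fun a _ => Finset.sum_congr rfl fun u _ => ?_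
    ring
  rw [hL, hR, ← Finset.sum_sub_distrib]
  refine Finset.dvd_sum fun a _ => ?_
  rw [← Finset.sum_sub_distrib]
  refine Finset.dvd_sum fun u _ => ?_
  rw [mul_assoc, mul_assoc, ← mul_sub, ← mul_sub]
  refine Dvd.dvd.mul_left (Dvd.dvd.mul_left ?_ _) _
  apply dvd_xpow_of_mod_eq
  rw [Fin.val_add, Nat.mod_mod_of_dvd] <;> simp [Nat.mod_self]

lemma bridge_pow {F : Type*} [CommRing F] (N : ℕ) [NeZero N] (v cf : Fin N → F) (k : ℕ) :
    (Polynomial.X ^ N - 1 : Polynomial F) ∣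
      repPoly N (Matrix.vecMul v ((circMat N cf) ^ k)) - repPoly N v * (repPoly N cf) ^ k := by
  induction k generalizing v with
  | zero => simp [Matrix.vecMul_one]
  | succ k ih =>
      have h1 : (circMat N cf) ^ (k + 1) = (circMat N cf) ^ k * circMat N cf := pow_succ _ _
      rw [h1, ← Matrix.vecMul_vecMul]
      have h2 := bridge N (Matrix.vecMul v ((circMat N cf) ^ k)) cf
      have h3 := ih v
      have : repPoly N (Matrix.vecMul (Matrix.vecMul v ((circMat N cf) ^ k)) (circMat N cf))
          - repPoly N v * (repPoly N cf) ^ (k + 1)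
          = (repPoly N (Matrix.vecMul (Matrix.vecMul v ((circMat N cf) ^ k)) (circMat N cf))
              - repPoly N (Matrix.vecMul v ((circMat N cf) ^ k)) * repPoly N cf)
            + (repPoly N (Matrix.vecMul v ((circMat N cf) ^ k))
                - repPoly N v * (repPoly N cf) ^ k) * repPoly N cf := by ring
      rw [this]
      exact dvd_add h2 (h3.mul_right _)

lemma squarefree_dvd_of_forall_prime {α : Type*} [CommMonoidWithZero α] [Nontrivial α]
    [UniqueFactorizationMonoid α] {f M : α} (hsq : Squarefree M)
    (h : ∀ p, Prime p → p ∣ M → p ∣ f) : M ∣ f := by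
  suffices H : ∀ M : α, Squarefree M → ∀ f, (∀ p, Prime p → p ∣ M → p ∣ f) → M ∣ f from
    H M hsq f h
  clear hsq h f M
  intro M
  induction M using UniqueFactorizationMonoid.induction_on_prime with
  | h₁ => intro h; exact absurd h not_squarefree_zero
  | h₂ x hx => intro _ f _; exact hx.dvd
  | h₃ a p ha hp ih =>
      intro hsq f h
      have hpf : p ∣ f := h p hp (dvd_mul_right _ _)
      obtain ⟨g, rfl⟩ := hpf
      have hag : a ∣ g := by
        apply ih hsq.of_mul_right g
        intro q hq hqa
        rcases hq.dvd_mul.mp (h q hq (hqa.mul_left p)) with hqp | hqg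
        · exfalso
          have hassoc : Associated q p := hq.associated_of_dvd hp hqp
          have : p ∣ a := hassoc.symm.dvd.trans hqa
          exact hp.not_unit (hsq p (mul_dvd_mul_left p this))
        · exact hqg
      exact mul_dvd_mul_left p hag

lemma zmod2_pow_self (a : ZMod 2) (n : ℕ) (hn : n ≠ 0) : a ^ n = a := by
  have h : ∀ b : ZMod 2, b = 0 ∨ b = 1 := by decide
  rcases h a with rfl | rfl
  · exact zero_pow hn
  · exact one_pow n

lemma moore_kernel {K : Type*} [Field K] [Algebra (ZMod 2) K] (r : ℕ)
    (β w : Fin r → K)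
    (hind : ∀ c : Fin r → ZMod 2, c ≠ 0 →
      ∑ l, algebraMap (ZMod 2) K (c l) * β l ≠ 0)
    (hker : ∀ l, ∑ s : Fin r, w s * β l ^ 2 ^ (s : ℕ) = 0) :
    ∀ s, w s = 0 := by
  haveI : CharP K 2 := charP_of_injective_algebraMap (algebraMap (ZMod 2) K).injective 2
  set L : Polynomial K := ∑ s : Fin r, Polynomial.C (w s) * Polynomial.X ^ (2 ^ (s : ℕ)) with hL
  have hL0 : L = 0 := by
    refine Polynomial.eq_zero_of_natDegree_lt_card_of_eval_eq_zero L
      (f := fun c : Fin r → ZMod 2 => ∑ l, algebraMap (ZMod 2) K (c l) * β l) ?_ ?_ ?_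
    · intro c c' hcc
      replace hcc : ∑ l, algebraMap (ZMod 2) K (c l) * β l
          = ∑ l, algebraMap (ZMod 2) K (c' l) * β l := hcc
      by_contra hne
      refine hind (c - c') (fun h => hne (sub_eq_zero.mp h)) ?_
      have h1 : ∀ l, algebraMap (ZMod 2) K ((c - c') l) * β l
          = algebraMap (ZMod 2) K (c l) * β l - algebraMap (ZMod 2) K (c' l) * β l := by
        intro l
        rw [Pi.sub_apply, map_sub, sub_mul]
      rw [Finset.sum_congr rfl fun l _ => h1 l, Finset.sum_sub_distrib, hcc, sub_self]
    · intro c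
      rw [hL, Polynomial.eval_finset_sum]
      simp only [Polynomial.eval_mul, Polynomial.eval_C, Polynomial.eval_pow, Polynomial.eval_X]
      have hpt : ∀ s : Fin r, (∑ l, algebraMap (ZMod 2) K (c l) * β l) ^ 2 ^ (s : ℕ)
          = ∑ l, algebraMap (ZMod 2) K (c l) * β l ^ 2 ^ (s : ℕ) := by
        intro s
        rw [sum_pow_char_pow]
        refine Finset.sum_congr rfl fun l _ => ?_
        rw [mul_pow, ← map_pow, zmod2_pow_self _ _ (pow_ne_zero _ two_ne_zero)]
      have h2 : ∀ s : Fin r,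
          w s * (∑ l, algebraMap (ZMod 2) K (c l) * β l) ^ 2 ^ (s : ℕ)
          = ∑ l, algebraMap (ZMod 2) K (c l) * (w s * β l ^ 2 ^ (s : ℕ)) := by
        intro s
        rw [hpt s, Finset.mul_sum]
        exact Finset.sum_congr rfl fun l _ => by ring
      rw [Finset.sum_congr rfl fun s _ => h2 s, Finset.sum_comm]
      refine Finset.sum_eq_zero fun l _ => ?_
      rw [← Finset.mul_sum, hker l, mul_zero]
    · have hcard : Fintype.card (Fin r → ZMod 2) = 2 ^ r := by
        rw [Fintype.card_fun, ZMod.card, Fintype.card_fin]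
      rw [hcard]
      have hbound : Polynomial.natDegree L ≤ 2 ^ r - 1 := by
        refine Polynomial.natDegree_sum_le_of_forall_le Finset.univ _ (fun s _ => ?_)
        refine le_trans (Polynomial.natDegree_C_mul_le _ _) ?_
        rw [Polynomial.natDegree_X_pow]
        have : 2 ^ (s : ℕ) < 2 ^ r := Nat.pow_lt_pow_right (by norm_num) s.isLt
        omega
      have : (0:ℕ) < 2 ^ r := Nat.pow_pos (by norm_num)
      omega
  intro s
  have hcoeff := congrArg (fun q => Polynomial.coeff q (2 ^ (s : ℕ))) hL0
  simp only [hL, Polynomial.finset_sum_coeff, Polynomial.coeff_C_mul, Polynomial.coeff_X_pow,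
    Polynomial.coeff_zero] at hcoeff
  rw [Finset.sum_eq_single s] at hcoeff
  · simpa using hcoeff
  · intro s' _ hs'
    have h2 : ¬ ((2 : ℕ) ^ (s : ℕ) = 2 ^ (s' : ℕ)) := by
      intro h
      exact hs' (Fin.ext (Nat.pow_right_injective le_rfl h)).symm
    rw [if_neg h2, mul_zero]
  · simp


lemma comb_ne_zero (r : ℕ) (hr : 0 < r) (pa : Fin r → Polynomial (ZMod 2))
    (p : Polynomial (ZMod 2)) [Fact (Irreducible p)]
    (hpe : ¬ p ∣ gcdExpr r hr pa) :
    ∀ c : Fin r → ZMod 2, c ≠ 0 →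
      ∑ l, algebraMap (ZMod 2) (AdjoinRoot p) (c l) * AdjoinRoot.mk p (pa l) ≠ 0 := by
  classical
  haveI : CharP (AdjoinRoot p) 2 :=
    charP_of_injective_algebraMap (algebraMap (ZMod 2) (AdjoinRoot p)).injective 2
  have mkC : ∀ a : ZMod 2, AdjoinRoot.mk p (Polynomial.C a)
      = algebraMap (ZMod 2) (AdjoinRoot p) a := by
    intro a; rw [AdjoinRoot.algebraMap_eq]; rfl
  intro c hc hzero
  obtain ⟨l0, hl0⟩ := Function.ne_iff.mp hc
  have hS : (Finset.univ.filter (fun l => c l ≠ 0)).Nonempty := ⟨l0, by simpa using hl0⟩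
  obtain ⟨L, hLmem, hmax⟩ : ∃ L ∈ Finset.univ.filter (fun l : Fin r => c l ≠ 0),
      ∀ l ∈ Finset.univ.filter (fun l : Fin r => c l ≠ 0), l ≤ L :=
    ⟨_, Finset.max'_mem _ hS, fun l hl => Finset.le_max' _ l hl⟩
  have hcL : c L ≠ 0 := (Finset.mem_filter.mp hLmem).2
  have hone : ∀ b : ZMod 2, b ≠ 0 → b = 1 := by decide
  have hcL1 : c L = 1 := hone _ hcL
  have hgt : ∀ l : Fin r, L < l → c l = 0 := by
    intro l hl
    by_contra h
    exact absurd (hmax l (Finset.mem_filter.mpr ⟨Finset.mem_univ _, h⟩)) (not_le.mpr hl)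
  have key : ∃ f, f ∣ gcdExpr r hr pa ∧
      AdjoinRoot.mk p f
        = ∑ l, algebraMap (ZMod 2) (AdjoinRoot p) (c l) * AdjoinRoot.mk p (pa l) := by
    rcases Nat.eq_zero_or_pos (L : ℕ) with hL0 | hLpos
    · refine ⟨pa ⟨0, hr⟩, dvd_mul_right _ _, ?_⟩
      rw [Finset.sum_eq_single L]
      · have hLeq : L = ⟨0, hr⟩ := Fin.ext hL0
        rw [hcL1, map_one, one_mul, hLeq]
      · intro l _ hlL
        have hcl : c l = 0 := by
          by_contra h
          have hle : l ≤ L := hmax l (Finset.mem_filter.mpr ⟨Finset.mem_univ _, h⟩)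
          have hv : (l : ℕ) = 0 := by have := Fin.le_def.mp hle; omega
          exact hlL (Fin.ext (by rw [hv, hL0]))
        rw [hcl, map_zero, zero_mul]
      · intro h; exact absurd (Finset.mem_univ L) h
    · obtain ⟨j, hj⟩ : ∃ j, (L : ℕ) = j + 1 := ⟨(L : ℕ) - 1, by omega⟩
      have hjr : j < r - 1 := by have := L.isLt; omega
      set jf : Fin (r - 1) := ⟨j, hjr⟩ with hjf
      set cc : Fin ((jf : ℕ) + 1) → ZMod 2 :=
        fun k => c ⟨(k : ℕ), by have := k.isLt; have := L.isLt; omega⟩ with hcc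
      set f : Polynomial (ZMod 2) :=
        pa ⟨(jf : ℕ) + 1, by have := jf.isLt; omega⟩ -
          ∑ k : Fin ((jf : ℕ) + 1),
            Polynomial.C (cc k) * pa ⟨(k : ℕ), by have := jf.isLt; have := k.isLt; omega⟩
        with hf
      have hdvd : f ∣ gcdExpr r hr pa := by
        refine Dvd.dvd.mul_left ?_ _
        refine dvd_trans ?_ (Finset.dvd_prod_of_mem _ (Finset.mem_univ jf))
        exact Finset.dvd_prod_of_mem _ (Finset.mem_univ cc)
      refine ⟨f, hdvd, ?_⟩
      set G : ℕ → AdjoinRoot p := fun i =>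
        if h : i < r then algebraMap (ZMod 2) (AdjoinRoot p) (c ⟨i, h⟩)
          * AdjoinRoot.mk p (pa ⟨i, h⟩) else 0 with hG
      have hstep1 : ∑ l : Fin r, algebraMap (ZMod 2) (AdjoinRoot p) (c l)
          * AdjoinRoot.mk p (pa l) = ∑ i ∈ Finset.range r, G i := by
        rw [← Fin.sum_univ_eq_sum_range]
        refine Finset.sum_congr rfl fun l _ => ?_
        rw [hG]
        simp only [l.isLt, dif_pos, Fin.eta]
      have hstep2 : ∑ i ∈ Finset.range r, G i = ∑ i ∈ Finset.range (j + 2), G i := by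
        refine (Finset.sum_subset (Finset.range_subset_range.mpr (by have := L.isLt; omega)) ?_).symm
        intro i hi hni
        rw [Finset.mem_range] at hi hni
        rw [hG]
        simp only [hi, dif_pos]
        have hci : c ⟨i, hi⟩ = 0 := by
          apply hgt
          rw [Fin.lt_def]
          show (L : ℕ) < i
          omega
        rw [hci, map_zero, zero_mul]
      have hstep3 : ∑ i ∈ Finset.range (j + 2), G i
          = ∑ i ∈ Finset.range (j + 1), G i + G (j + 1) := Finset.sum_range_succ _ _
      have hGj : G (j + 1) = AdjoinRoot.mk p (pa ⟨(jf : ℕ) + 1, by have := jf.isLt; omega⟩) := by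
        have hjr' : j + 1 < r := by have := L.isLt; omega
        rw [hG]
        simp only [hjr', dif_pos]
        have hLe : (⟨j + 1, hjr'⟩ : Fin r) = L := Fin.ext (by show j + 1 = (L : ℕ); omega)
        rw [hLe, hcL1, map_one, one_mul]
      have hstep4 : ∑ i ∈ Finset.range (j + 1), G i
          = ∑ k : Fin ((jf : ℕ) + 1), algebraMap (ZMod 2) (AdjoinRoot p) (cc k)
              * AdjoinRoot.mk p
                (pa ⟨(k : ℕ), by have := jf.isLt; have := k.isLt; omega⟩) := by
        rw [← Fin.sum_univ_eq_sum_range (fun i => G i) (j + 1)]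
        refine Finset.sum_congr rfl fun k _ => ?_
        have hkr : (k : ℕ) < r := by have := k.isLt; have := L.isLt; omega
        rw [hG]
        simp only [hkr, dif_pos]
        rfl
      have hterm : ∀ k : Fin ((jf : ℕ) + 1),
          AdjoinRoot.mk p (Polynomial.C (cc k)
            * pa ⟨(k : ℕ), by have := jf.isLt; have := k.isLt; omega⟩)
          = algebraMap (ZMod 2) (AdjoinRoot p) (cc k)
            * AdjoinRoot.mk p (pa ⟨(k : ℕ), by have := jf.isLt; have := k.isLt; omega⟩) := by
        intro k
        rw [map_mul, mkC]
      have hmkf : AdjoinRoot.mk p f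
          = AdjoinRoot.mk p (pa ⟨(jf : ℕ) + 1, by have := jf.isLt; omega⟩)
            - ∑ k : Fin ((jf : ℕ) + 1), algebraMap (ZMod 2) (AdjoinRoot p) (cc k)
              * AdjoinRoot.mk p
                (pa ⟨(k : ℕ), by have := jf.isLt; have := k.isLt; omega⟩) := by
        rw [hf, map_sub, map_sum]
        congr 1
      rw [hmkf, hstep1, hstep2, hstep3, hstep4, ← hGj]
      rw [sub_eq_add_neg, CharTwo.neg_eq, add_comm]
  obtain ⟨f, hfdvd, hfsum⟩ := key
  have hp0 : AdjoinRoot.mk p f = 0 := by rw [hfsum, hzero]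
  exact hpe ((AdjoinRoot.mk_eq_zero.mp hp0).trans hfdvd)


/-- **Binary block MDS array codes from punctured CM(t)s with Moore structure.**
Let `N ≥ 3` be odd, `1 ≤ r < m`, and let `a 1, …, a m ∈ F₂[x]/(x^N - 1)` each have
exactly `t` nonzero coefficients with `t` even, with circulant matrices `A 1, …, A m`.
If for every `r`-element subset `{i 1, …, i r} ⊆ [m]` the gcd condition
`gcd(â_{i 1} · ∏_j ∏_c (â_{i (j+1)} - ∑ c_k â_{i k}), x^N - 1) = x - 1` holds, then
for every `r`-element subset the `r(N-1) × r(N-1)` block matrix with `(s, l)` block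
`Pu(A_{i l} ^ (2 ^ (s-1)), 1)` is invertible over `F₂`; i.e. the block matrix `H` with
blocks `Pu(A j ^ (2 ^ (s-1)), 1)` is the parity-check matrix of an MDS array code over
`F₂` with sub-packetization level `N - 1`. -/
theorem punctured_cm_moore_mds
    (N : ℕ) (hN : 3 ≤ N) (hNodd : Odd N)
    (r m : ℕ) (hr : 1 ≤ r) (hrm : r < m)
    (cf : Fin m → Fin N → ZMod 2)
    (t : ℕ) (hteven : Even t)
    (hwt : ∀ i : Fin m, (Finset.univ.filter fun u : Fin N => cf i u ≠ 0).card = t)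
    (hgcd : ∀ σ : Fin r → Fin m, Function.Injective σ →
      EuclideanDomain.gcd (gcdExpr r hr fun l => repPoly N (cf (σ l)))
          (Polynomial.X ^ N - 1)
        = Polynomial.X - 1) :
    ∀ σ : Fin r → Fin m, Function.Injective σ →
      (Matrix.of fun p c : Fin r × Fin (N - 1) =>
        (circMat N (cf (σ c.1)) ^ 2 ^ (p.1 : ℕ))
          (Fin.castLE (Nat.sub_le N 1) p.2) (Fin.castLE (Nat.sub_le N 1) c.2)).det ≠ 0 := by
  intro σ hσ hdet
  classical
  haveI : NeZero N := ⟨by omega⟩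
  set P : Polynomial (ZMod 2) := Polynomial.X ^ N - 1 with hPdef
  set Mg : Polynomial (ZMod 2) := ∑ i ∈ Finset.range N, Polynomial.X ^ i with hMdef
  have hPM : Mg * (Polynomial.X - 1) = P := geom_sum_mul _ N
  have hMdvdP : Mg ∣ P := ⟨Polynomial.X - 1, hPM.symm⟩
  have hN2 : ((N : ℕ) : ZMod 2) = 1 := by
    have h1 : N % 2 = 1 := Nat.odd_iff.mp hNodd
    rw [← ZMod.natCast_mod N 2, h1]
    norm_num
  have hone : ∀ b : ZMod 2, b ≠ 0 → b = 1 := by decide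
  have hMeval1 : Mg.eval 1 = 1 := by
    rw [hMdef, Polynomial.eval_finset_sum]
    simp only [Polynomial.eval_pow, Polynomial.eval_X, one_pow, Finset.sum_const,
      Finset.card_range, nsmul_eq_mul, mul_one]
    exact hN2
  have hPeval1 : P.eval 1 = 0 := by rw [hPdef]; simp
  have hXC1 : (Polynomial.C (1 : ZMod 2)) = 1 := map_one _
  have hPsf : Squarefree P := by
    apply Polynomial.Separable.squarefree
    rw [Polynomial.separable_def]
    have hderiv : Polynomial.derivative P = Polynomial.X ^ (N - 1) := by
      rw [hPdef, Polynomial.derivative_sub, Polynomial.derivative_one,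
        Polynomial.derivative_X_pow, hN2, hXC1, one_mul, sub_zero]
    rw [hderiv]
    have hco : IsCoprime P (Polynomial.X : Polynomial (ZMod 2)) := by
      refine ⟨-1, Polynomial.X ^ (N - 1), ?_⟩
      have hXX : (Polynomial.X : Polynomial (ZMod 2)) ^ (N - 1) * Polynomial.X
          = Polynomial.X ^ N := by
        rw [← pow_succ]
        congr 1
        omega
      rw [hXX, hPdef]
      ring
    exact hco.pow_right
  have hMsf : Squarefree Mg := Squarefree.squarefree_of_dvd hMdvdP hPsf
  have hsum0 : ∀ i : Fin m, ∑ u, cf i u = 0 := by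
    intro i
    have h1 : ∑ u ∈ Finset.univ.filter (fun u => cf i u ≠ 0), cf i u = ∑ u, cf i u :=
      Finset.sum_filter_ne_zero _
    have h2 : ∑ u ∈ Finset.univ.filter (fun u => cf i u ≠ 0), cf i u
        = ∑ u ∈ Finset.univ.filter (fun u => cf i u ≠ 0), 1 :=
      Finset.sum_congr rfl fun u hu => hone _ (Finset.mem_filter.mp hu).2
    rw [← h1, h2, Finset.sum_const, hwt i, nsmul_eq_mul, mul_one]
    exact (ZMod.natCast_eq_zero_iff t 2).mpr hteven.two_dvd
  set pa : Fin r → Polynomial (ZMod 2) := fun l => repPoly N (cf (σ l)) with hpa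
  have hpaeval1 : ∀ l, (pa l).eval 1 = 0 := fun l => by
    rw [hpa, repPoly_eval_one]; exact hsum0 _
  obtain ⟨v, hv0, hvPu⟩ := Matrix.exists_vecMul_eq_zero_iff.mpr hdet
  set V : Fin r → Fin N → ZMod 2 := fun s b =>
    if h : (b : ℕ) < N - 1 then v (s, ⟨(b : ℕ), h⟩) else 0 with hV
  set z : Fin r → Fin N → ZMod 2 := fun l =>
    ∑ s : Fin r, Matrix.vecMul (V s) ((circMat N (cf (σ l))) ^ 2 ^ (s : ℕ)) with hz
  set uu : Fin r → Polynomial (ZMod 2) := fun l =>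
    ∑ s : Fin r, repPoly N (V s) * (pa l) ^ 2 ^ (s : ℕ) with huu
  have hdvd1 : ∀ l, P ∣ repPoly N (z l) - uu l := by
    intro l
    rw [hz, huu, repPoly_sum, ← Finset.sum_sub_distrib]
    exact Finset.dvd_sum fun s _ => bridge_pow N (V s) (cf (σ l)) (2 ^ (s : ℕ))
  have hueval1 : ∀ l, (uu l).eval 1 = 0 := by
    intro l
    rw [huu, Polynomial.eval_finset_sum]
    refine Finset.sum_eq_zero fun s _ => ?_
    rw [Polynomial.eval_mul, Polynomial.eval_pow, hpaeval1 l,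
      zero_pow (pow_ne_zero _ two_ne_zero), mul_zero]
  have hzsum : ∀ l, ∑ b, z l b = 0 := by
    intro l
    obtain ⟨q, hq⟩ := hdvd1 l
    have h1 := congrArg (Polynomial.eval 1) hq
    rw [Polynomial.eval_sub, Polynomial.eval_mul, hPeval1, zero_mul, sub_eq_zero,
      hueval1 l] at h1
    rw [← repPoly_eval_one]
    exact h1
  have hsum_img : ∀ f : Fin N → ZMod 2, (∀ b : Fin N, ¬ ((b : ℕ) < N - 1) → f b = 0) →
      ∑ b, f b = ∑ i : Fin (N - 1), f (Fin.castLE (Nat.sub_le N 1) i) := by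
    intro f hf
    have h1 : ∑ b ∈ Finset.univ.image (Fin.castLE (Nat.sub_le N 1)), f b
        = ∑ i : Fin (N - 1), f (Fin.castLE (Nat.sub_le N 1) i) :=
      Finset.sum_image (fun i _ k _ h => Fin.castLE_injective _ h)
    have h2 : ∑ b ∈ Finset.univ.image (Fin.castLE (Nat.sub_le N 1)), f b = ∑ b, f b := by
      refine Finset.sum_subset (Finset.subset_univ _) ?_
      intro b _ hb
      refine hf b fun hlt => hb ?_
      exact Finset.mem_image.mpr ⟨⟨(b : ℕ), hlt⟩, Finset.mem_univ _, Fin.ext rfl⟩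
    rw [← h2, h1]
  have hzlow : ∀ l : Fin r, ∀ b : Fin N, (b : ℕ) < N - 1 → z l b = 0 := by
    intro l b hb
    set j : Fin (N - 1) := ⟨(b : ℕ), hb⟩ with hj
    have hcb : Fin.castLE (Nat.sub_le N 1) j = b := Fin.ext rfl
    have hlhs : z l b = ∑ s : Fin r, ∑ i : Fin (N - 1), v (s, i) *
        ((circMat N (cf (σ l)) ^ 2 ^ (s : ℕ))
          (Fin.castLE (Nat.sub_le N 1) i) (Fin.castLE (Nat.sub_le N 1) j)) := by
      show (∑ s : Fin r, Matrix.vecMul (V s) ((circMat N (cf (σ l))) ^ 2 ^ (s : ℕ))) b = _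
      rw [Finset.sum_apply]
      refine Finset.sum_congr rfl fun s _ => ?_
      have hvm : Matrix.vecMul (V s) ((circMat N (cf (σ l))) ^ 2 ^ (s : ℕ)) b
          = ∑ b' : Fin N, V s b' * ((circMat N (cf (σ l))) ^ 2 ^ (s : ℕ)) b' b := rfl
      rw [hvm, hsum_img _ (fun b' hb' => by rw [hV]; simp only [dif_neg hb', zero_mul])]
      refine Finset.sum_congr rfl fun i _ => ?_
      rw [hcb, hV]
      have hilt : ((Fin.castLE (Nat.sub_le N 1) i : Fin N) : ℕ) < N - 1 := i.isLt
      simp only [dif_pos hilt]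
      have hieq : (⟨((Fin.castLE (Nat.sub_le N 1) i : Fin N) : ℕ), hilt⟩ : Fin (N - 1)) = i :=
        Fin.ext rfl
      rw [hieq]
    have hrhs := congrFun hvPu (l, j)
    have hexp : Matrix.vecMul v (Matrix.of fun p c : Fin r × Fin (N - 1) =>
        (circMat N (cf (σ c.1)) ^ 2 ^ (p.1 : ℕ))
          (Fin.castLE (Nat.sub_le N 1) p.2) (Fin.castLE (Nat.sub_le N 1) c.2)) (l, j)
        = ∑ s : Fin r, ∑ i : Fin (N - 1), v (s, i) *
          ((circMat N (cf (σ l)) ^ 2 ^ (s : ℕ))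
            (Fin.castLE (Nat.sub_le N 1) i) (Fin.castLE (Nat.sub_le N 1) j)) := by
      have hvm : Matrix.vecMul v (Matrix.of fun p c : Fin r × Fin (N - 1) =>
          (circMat N (cf (σ c.1)) ^ 2 ^ (p.1 : ℕ))
            (Fin.castLE (Nat.sub_le N 1) p.2) (Fin.castLE (Nat.sub_le N 1) c.2)) (l, j)
          = ∑ q : Fin r × Fin (N - 1), v q *
            ((circMat N (cf (σ l)) ^ 2 ^ (q.1 : ℕ))
              (Fin.castLE (Nat.sub_le N 1) q.2) (Fin.castLE (Nat.sub_le N 1) j)) := rfl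
      rw [hvm, Fintype.sum_prod_type]
    rw [hlhs, ← hexp, hrhs]
    rfl
  have hz0 : ∀ l, z l = 0 := by
    intro l
    funext b
    by_cases hb : (b : ℕ) < N - 1
    · exact hzlow l b hb
    · have hsum := hzsum l
      rw [Finset.sum_eq_single b] at hsum
      · exact hsum
      · intro b' _ hb'
        refine hzlow l b' ?_
        have hne : (b' : ℕ) ≠ (b : ℕ) := fun h => hb' (Fin.ext h)
        have := b'.isLt
        have := b.isLt
        omega
      · intro h; exact absurd (Finset.mem_univ b) h
  have hPuu : ∀ l, P ∣ uu l := by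
    intro l
    have h := hdvd1 l
    rw [hz0 l] at h
    have hrep0 : repPoly N (0 : Fin N → ZMod 2) = 0 := by simp [repPoly]
    rw [hrep0, zero_sub, dvd_neg] at h
    exact h
  have hMdvdV : ∀ s : Fin r, Mg ∣ repPoly N (V s) := by
    intro s
    refine squarefree_dvd_of_forall_prime hMsf ?_
    intro p hp hpM
    haveI : Fact (Irreducible p) := ⟨hp.irreducible⟩
    have hpe : ¬ p ∣ gcdExpr r hr pa := by
      intro hpdvd
      have hgcddvd : p ∣ Polynomial.X - 1 := by
        rw [← hgcd σ hσ]
        exact EuclideanDomain.dvd_gcd hpdvd (hpM.trans hMdvdP)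
      obtain ⟨w, hw⟩ : (Polynomial.X - 1 : Polynomial (ZMod 2)) ∣ Mg - 1 := by
        have h := Polynomial.X_sub_C_dvd_sub_C_eval (a := (1 : ZMod 2)) (p := Mg)
        rwa [hXC1, hMeval1] at h
      have hco : IsCoprime (Polynomial.X - 1 : Polynomial (ZMod 2)) Mg := by
        refine ⟨-w, 1, ?_⟩
        have : Mg = (Polynomial.X - 1) * w + 1 := by
          rw [← hw]; ring
        rw [this]; ring
      exact hp.not_unit (hco.isUnit_of_dvd' hgcddvd hpM)
    have hker : ∀ l : Fin r, ∑ s' : Fin r,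
        AdjoinRoot.mk p (repPoly N (V s')) * (AdjoinRoot.mk p (pa l)) ^ 2 ^ (s' : ℕ) = 0 := by
      intro l
      have h1 : AdjoinRoot.mk p (uu l) = 0 :=
        AdjoinRoot.mk_eq_zero.mpr ((hpM.trans hMdvdP).trans (hPuu l))
      rw [huu, map_sum] at h1
      rw [← h1]
      exact Finset.sum_congr rfl fun s' _ => by rw [map_mul, map_pow]
    have hres := moore_kernel r (fun l => AdjoinRoot.mk p (pa l))
      (fun s' => AdjoinRoot.mk p (repPoly N (V s')))
      (comb_ne_zero r (by omega) pa p hpe) hker s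
    exact AdjoinRoot.mk_eq_zero.mp hres
  have hVzero : ∀ s, repPoly N (V s) = 0 := by
    intro s
    have hdlt : (repPoly N (V s)).degree < ((N - 1 : ℕ) : WithBot ℕ) := by
      rw [Polynomial.degree_lt_iff_coeff_zero]
      intro mm hmm
      rw [repPoly_coeff]
      split_ifs with h
      · rw [hV]
        have : ¬ ((mm : ℕ) < N - 1) := by
          simp only [not_lt]
          exact_mod_cast hmm
        simp only [dif_neg this]
      · rfl
    have hdegs : (Polynomial.X - 1 : Polynomial (ZMod 2)).degree = 1 := by
      rw [← hXC1]; exact Polynomial.degree_X_sub_C 1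
    have hdv : P ∣ (Polynomial.X - 1) * repPoly N (V s) := by
      obtain ⟨g, hg⟩ := hMdvdV s
      exact ⟨g, by rw [hg, ← hPM]; ring⟩
    have hdegP : P.degree = (N : ℕ) := by
      rw [hPdef, ← hXC1]
      exact Polynomial.degree_X_pow_sub_C (by omega) 1
    have hdeg2 : ((Polynomial.X - 1) * repPoly N (V s)).degree < P.degree := by
      rw [hdegP]
      calc ((Polynomial.X - 1) * repPoly N (V s)).degree
          ≤ (Polynomial.X - 1 : Polynomial (ZMod 2)).degree + (repPoly N (V s)).degree :=
            Polynomial.degree_mul_le _ _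
        _ = 1 + (repPoly N (V s)).degree := by rw [hdegs]
        _ < 1 + ((N - 1 : ℕ) : WithBot ℕ) := by
            exact WithBot.add_lt_add_left (by simp) hdlt
        _ = ((N : ℕ) : WithBot ℕ) := by
            rw [show (1 : WithBot ℕ) = ((1 : ℕ) : WithBot ℕ) from rfl, ← Nat.cast_add]
            congr 1
            omega
    have h0 : (Polynomial.X - 1) * repPoly N (V s) = 0 :=
      Polynomial.eq_zero_of_dvd_of_degree_lt hdv hdeg2
    rcases mul_eq_zero.mp h0 with h | h
    · exact absurd h (by rw [← hXC1]; exact Polynomial.X_sub_C_ne_zero 1)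
    · exact h
  apply hv0
  funext q
  obtain ⟨s, i⟩ := q
  have hco : (repPoly N (V s)).coeff ((i : ℕ)) = (0 : Polynomial (ZMod 2)).coeff ((i : ℕ)) := by
    rw [hVzero s]
  rw [repPoly_coeff] at hco
  have hiN : (i : ℕ) < N := by have := i.isLt; omega
  simp only [dif_pos hiN, Polynomial.coeff_zero] at hco
  rw [hV] at hco
  have hil : (i : ℕ) < N - 1 := i.isLt
  simp only [dif_pos hil] at hco
  have : ((⟨(i : ℕ), hil⟩ : Fin (N - 1))) = i := Fin.ext rfl
  rw [this] at hco
  exact hco
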